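/- If ρ and σ are density matrices on a d-dimensional Hilbert space with trace distance D(ρ,σ), then |S(ρ) - S(σ)| ≤ D(ρ,σ)·log d + h(D(ρ,σ)), where h(x) = -x log₂ x - (1-x) log₂(1-x) is the binary entropy (Fannes–Audenaert inequality). -/

import Mathlib

open Matrix
open scoped ComplexOrder

/-- Matrix function via the continuous functional calculus (for Hermitian matrices). -/
noncomputable def mfun {n : Type*} [Fintype n] [DecidableEq n]
    (f : ℝ → ℝ) (A : Matrix n n ℂ) : Matrix n n ℂ := cfc f A

/-- A density matrix: positive semidefinite with unit trace. -/
def IsDensityMatrix {n : Type*} [Fintype n] [DecidableEq n] (ρ : Matrix n n ℂ) : Prop :=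
  ρ.PosSemidef ∧ Matrix.trace ρ = 1

/-- Trace distance `D(ρ,σ) = ½‖ρ-σ‖₁`. -/
noncomputable def traceDist {n : Type*} [Fintype n] [DecidableEq n]
    (ρ σ : Matrix n n ℂ) : ℝ :=
  (1 / 2) * (Matrix.trace (mfun (fun x => |x|) (ρ - σ))).re

/-- Fidelity `F(ρ,σ) = (Tr √(√ρ σ √ρ))²`. -/
noncomputable def fidelity {n : Type*} [Fintype n] [DecidableEq n]
    (ρ σ : Matrix n n ℂ) : ℝ :=
  ((Matrix.trace (mfun Real.sqrt (mfun Real.sqrt ρ * σ * mfun Real.sqrt ρ))).re) ^ 2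

/-- Von Neumann entropy (in bits), `S(ρ) = -Tr[ρ log₂ ρ]`. -/
noncomputable def vnEnt {n : Type*} [Fintype n] [DecidableEq n] (ρ : Matrix n n ℂ) : ℝ :=
  -(Matrix.trace (ρ * mfun (Real.logb 2) ρ)).re

/-- Binary entropy function. -/
noncomputable def binEnt (x : ℝ) : ℝ :=
  -x * Real.logb 2 x - (1 - x) * Real.logb 2 (1 - x)


section FAClassical
open Real

-- subadditivity of negMulLog
lemma negMulLog_add_le {a b : ℝ} (ha : 0 ≤ a) (hb : 0 ≤ b) :
    Real.negMulLog (a + b) ≤ Real.negMulLog a + Real.negMulLog b := by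
  rcases eq_or_lt_of_le ha with rfl | ha
  · simp
  rcases eq_or_lt_of_le hb with rfl | hb
  · simp
  have hab : 0 < a + b := by linarith
  simp only [Real.negMulLog, neg_mul]
  have h1 : a * Real.log a ≤ a * Real.log (a + b) :=
    mul_le_mul_of_nonneg_left (Real.log_le_log ha (by linarith)) ha.le
  have h2 : b * Real.log b ≤ b * Real.log (a + b) :=
    mul_le_mul_of_nonneg_left (Real.log_le_log hb (by linarith)) hb.le
  nlinarith [add_mul a b (Real.log (a+b))]

-- entropy bounded by log card
lemma ent_le_log_card {d : ℕ} (hd : 0 < d) (p : Fin d → ℝ) (hp : ∀ i, 0 ≤ p i)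
    (hsum : ∑ i, p i = 1) :
    ∑ i, Real.negMulLog (p i) ≤ Real.log d := by
  have key : ∀ i, Real.negMulLog (p i) - p i * Real.log d ≤ 1 / d - p i := by
    intro i
    rcases eq_or_lt_of_le (hp i) with h | h
    · simp only [← h, Real.negMulLog, neg_zero, zero_mul, mul_zero, neg_mul, sub_zero]
      positivity
    · have hdp : 0 < (d : ℝ) * p i := by positivity
      have := Real.log_le_sub_one_of_pos (x := 1 / ((d : ℝ) * p i)) (by positivity)
      rw [Real.log_div one_ne_zero (ne_of_gt hdp), Real.log_one, Real.log_mul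
        (by positivity) (ne_of_gt h)] at this
      have h2 : p i * (0 - (Real.log d + Real.log (p i))) ≤ p i * (1 / ((d:ℝ) * p i) - 1) :=
        mul_le_mul_of_nonneg_left this (hp i)
      have h3 : p i * (1 / ((d:ℝ) * p i) - 1) = 1/d - p i := by
        field_simp
      rw [h3] at h2
      simp only [Real.negMulLog]
      nlinarith
  calc ∑ i, Real.negMulLog (p i) = ∑ i, (Real.negMulLog (p i) - p i * Real.log d) + Real.log d := by
        rw [Finset.sum_sub_distrib, ← Finset.sum_mul, hsum]; ring
    _ ≤ ∑ i, (1/(d:ℝ) - p i) + Real.log d := by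
        have := Finset.sum_le_sum (fun i (_ : i ∈ Finset.univ) => key i)
        linarith
    _ = Real.log d := by
        rw [Finset.sum_sub_distrib, hsum]
        simp [Finset.sum_const, Finset.card_univ]
        field_simp
        ring

lemma ent_nonneg {d : ℕ} (p : Fin d → ℝ) (hp : ∀ i, 0 ≤ p i) (hp1 : ∀ i, p i ≤ 1) :
    0 ≤ ∑ i, Real.negMulLog (p i) :=
  Finset.sum_nonneg fun i _ => Real.negMulLog_nonneg (hp i) (hp1 i)

lemma mixing_le {d : ℕ} (p q : Fin d → ℝ) (hp : ∀ i, 0 ≤ p i) (hq : ∀ i, 0 ≤ q i)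
    (hsp : ∑ i, p i = 1) (hsq : ∑ i, q i = 1) {t : ℝ} (ht0 : 0 ≤ t) (ht1 : t ≤ 1) :
    ∑ i, Real.negMulLog (t * p i + (1 - t) * q i) ≤
      t * ∑ i, Real.negMulLog (p i) + (1 - t) * ∑ i, Real.negMulLog (q i)
        + (Real.negMulLog t + Real.negMulLog (1 - t)) := by
  have key : ∀ i, Real.negMulLog (t * p i + (1 - t) * q i) ≤
      t * Real.negMulLog (p i) + (1 - t) * Real.negMulLog (q i)
        + (p i * Real.negMulLog t + q i * Real.negMulLog (1 - t)) := by
    intro i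
    calc Real.negMulLog (t * p i + (1 - t) * q i)
        ≤ Real.negMulLog (t * p i) + Real.negMulLog ((1 - t) * q i) :=
          negMulLog_add_le (mul_nonneg ht0 (hp i)) (mul_nonneg (by linarith) (hq i))
      _ = t * Real.negMulLog (p i) + (1 - t) * Real.negMulLog (q i)
            + (p i * Real.negMulLog t + q i * Real.negMulLog (1 - t)) := by
          rw [Real.negMulLog_mul, Real.negMulLog_mul]; ring
  calc ∑ i, Real.negMulLog (t * p i + (1 - t) * q i)
      ≤ ∑ i, (t * Real.negMulLog (p i) + (1 - t) * Real.negMulLog (q i)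
        + (p i * Real.negMulLog t + q i * Real.negMulLog (1 - t))) :=
        Finset.sum_le_sum fun i _ => key i
    _ = t * ∑ i, Real.negMulLog (p i) + (1 - t) * ∑ i, Real.negMulLog (q i)
        + (Real.negMulLog t + Real.negMulLog (1 - t)) := by
        simp only [Finset.sum_add_distrib, ← Finset.mul_sum, ← Finset.sum_mul, hsp, hsq]
        ring

lemma mixing_ge {d : ℕ} (p q : Fin d → ℝ) (hp : ∀ i, 0 ≤ p i) (hq : ∀ i, 0 ≤ q i)
    {t : ℝ} (ht0 : 0 ≤ t) (ht1 : t ≤ 1) :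
    t * ∑ i, Real.negMulLog (p i) + (1 - t) * ∑ i, Real.negMulLog (q i) ≤
      ∑ i, Real.negMulLog (t * p i + (1 - t) * q i) := by
  have key : ∀ i, t * Real.negMulLog (p i) + (1 - t) * Real.negMulLog (q i) ≤
      Real.negMulLog (t * p i + (1 - t) * q i) := by
    intro i
    have := Real.concaveOn_negMulLog.2 (Set.mem_Ici.mpr (hp i)) (Set.mem_Ici.mpr (hq i))
      ht0 (show (0:ℝ) ≤ 1 - t by linarith) (show t + (1 - t) = 1 by ring)
    simpa [smul_eq_mul] using this
  calc t * ∑ i, Real.negMulLog (p i) + (1 - t) * ∑ i, Real.negMulLog (q i)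
      = ∑ i, (t * Real.negMulLog (p i) + (1 - t) * Real.negMulLog (q i)) := by
        simp only [Finset.sum_add_distrib, ← Finset.mul_sum]
    _ ≤ _ := Finset.sum_le_sum fun i _ => key i

/-- One-sided classical Fannes with slack total variation parameter. -/
lemma classical_fannes_one_sided {d : ℕ} (p q : Fin d → ℝ)
    (hp : ∀ i, 0 ≤ p i) (hq : ∀ i, 0 ≤ q i)
    (hsp : ∑ i, p i = 1) (hsq : ∑ i, q i = 1) {T : ℝ}
    (hTV : (1/2) * ∑ i, |p i - q i| ≤ T) (hT1 : T ≤ 1) :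
    ∑ i, Real.negMulLog (p i) - ∑ i, Real.negMulLog (q i) ≤
      T * Real.log d + (Real.negMulLog T + Real.negMulLog (1 - T)) := by
  have hd : 0 < d := by
    rcases Nat.eq_zero_or_pos d with rfl | h
    · simp at hsp
    · exact h
  have hq1 : ∀ i, q i ≤ 1 := fun i => by
    calc q i ≤ ∑ j, q j := Finset.single_le_sum (fun j _ => hq j) (Finset.mem_univ i)
      _ = 1 := hsq
  have hp1 : ∀ i, p i ≤ 1 := fun i => by
    calc p i ≤ ∑ j, p j := Finset.single_le_sum (fun j _ => hp j) (Finset.mem_univ i)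
      _ = 1 := hsp
  have hTV0 : 0 ≤ (1/2) * ∑ i, |p i - q i| := by positivity
  have hT0 : 0 ≤ T := le_trans hTV0 hTV
  rcases eq_or_lt_of_le hT0 with rfl | hT0'
  · -- T = 0 : p = q
    have : ∑ i, |p i - q i| = 0 := le_antisymm (by linarith) (by positivity)
    have hpq : ∀ i, p i = q i := by
      intro i
      have := (Finset.sum_eq_zero_iff_of_nonneg (fun i _ => abs_nonneg _)).mp this i
        (Finset.mem_univ i)
      have := abs_eq_zero.mp this
      linarith
    have : ∑ i, Real.negMulLog (p i) = ∑ i, Real.negMulLog (q i) :=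
      Finset.sum_congr rfl (fun i _ => by rw [hpq i])
    rw [this]
    simp [Real.negMulLog]
  rcases eq_or_lt_of_le hT1 with rfl | hT1'
  · -- T = 1
    have h1 : ∑ i, Real.negMulLog (p i) ≤ Real.log d := ent_le_log_card hd p hp hsp
    have h2 : 0 ≤ ∑ i, Real.negMulLog (q i) := ent_nonneg q hq hq1
    simp only [Real.negMulLog_one, sub_self, Real.negMulLog_zero]
    linarith
  -- 0 < T < 1
  set TV := (1/2) * ∑ i, |p i - q i| with hTVdef
  have hTVlt1 : TV < 1 := lt_of_le_of_lt hTV hT1'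
  set m : Fin d → ℝ := fun i => min (p i) (q i) with hm
  have hsm : ∑ i, m i = 1 - TV := by
    have : ∀ i, m i = (p i + q i - |p i - q i|) / 2 := by
      intro i; show min (p i) (q i) = _
      rcases le_total (p i) (q i) with h | h
      · rw [min_eq_left h, abs_of_nonpos (by linarith)]; ring
      · rw [min_eq_right h, abs_of_nonneg (by linarith)]; ring
    simp only [this]
    rw [hTVdef, ← Finset.sum_div]
    simp only [Finset.sum_sub_distrib, Finset.sum_add_distrib, hsp, hsq]
    ring
  set w : Fin d → ℝ := fun i => m i / (1 - TV) with hw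
  have hw0 : ∀ i, 0 ≤ w i := fun i => div_nonneg (le_min (hp i) (hq i)) (by linarith)
  have hsw : ∑ i, w i = 1 := by
    show ∑ i, m i / (1 - TV) = 1
    rw [← Finset.sum_div, hsm]; exact div_self (by linarith)
  have hm0 : ∀ i, 0 ≤ m i := fun i => le_min (hp i) (hq i)
  have hkey : ∀ i, (1 - T) * w i ≤ m i := by
    intro i
    have h1 : (1 - T) * w i = m i * ((1 - T) / (1 - TV)) := by rw [hw]; ring
    rw [h1]
    exact mul_le_of_le_one_right (hm0 i) ((div_le_one (by linarith)).mpr (by linarith))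
  set a : Fin d → ℝ := fun i => (p i - (1 - T) * w i) / T with haa
  set b : Fin d → ℝ := fun i => (q i - (1 - T) * w i) / T with hbb
  have ha0 : ∀ i, 0 ≤ a i := fun i =>
    div_nonneg (by have := hkey i; have : m i ≤ p i := min_le_left _ _; linarith [hkey i]) hT0
  have hb0 : ∀ i, 0 ≤ b i := fun i =>
    div_nonneg (by have : m i ≤ q i := min_le_right _ _; linarith [hkey i]) hT0
  have hsa : ∑ i, a i = 1 := by
    show ∑ i, (p i - (1 - T) * w i) / T = 1
    rw [← Finset.sum_div, Finset.sum_sub_distrib, hsp, ← Finset.mul_sum, hsw]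
    field_simp
    ring
  have hsb : ∑ i, b i = 1 := by
    show ∑ i, (q i - (1 - T) * w i) / T = 1
    rw [← Finset.sum_div, Finset.sum_sub_distrib, hsq, ← Finset.mul_sum, hsw]
    field_simp
    ring
  have hpdec : ∀ i, p i = T * a i + (1 - T) * w i := by
    intro i; show p i = T * ((p i - (1 - T) * w i) / T) + (1 - T) * w i
    field_simp
    ring
  have hqdec : ∀ i, q i = T * b i + (1 - T) * w i := by
    intro i; show q i = T * ((q i - (1 - T) * w i) / T) + (1 - T) * w i
    field_simp
    ring
  have hup : ∑ i, Real.negMulLog (p i) ≤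
      T * ∑ i, Real.negMulLog (a i) + (1 - T) * ∑ i, Real.negMulLog (w i)
        + (Real.negMulLog T + Real.negMulLog (1 - T)) := by
    have := mixing_le a w ha0 hw0 hsa hsw hT0 hT1
    calc ∑ i, Real.negMulLog (p i) = ∑ i, Real.negMulLog (T * a i + (1 - T) * w i) :=
          Finset.sum_congr rfl (fun i _ => by rw [← hpdec i])
      _ ≤ _ := this
  have hlo : T * ∑ i, Real.negMulLog (b i) + (1 - T) * ∑ i, Real.negMulLog (w i) ≤
      ∑ i, Real.negMulLog (q i) := by
    have := mixing_ge b w hb0 hw0 hT0 hT1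
    calc T * ∑ i, Real.negMulLog (b i) + (1 - T) * ∑ i, Real.negMulLog (w i)
        ≤ ∑ i, Real.negMulLog (T * b i + (1 - T) * w i) := this
      _ = ∑ i, Real.negMulLog (q i) := Finset.sum_congr rfl (fun i _ => by rw [← hqdec i])
  have hentA : ∑ i, Real.negMulLog (a i) ≤ Real.log d := ent_le_log_card hd a ha0 hsa
  have hentB : 0 ≤ ∑ i, Real.negMulLog (b i) :=
    ent_nonneg b hb0 (fun i => by
      calc b i ≤ ∑ j, b j := Finset.single_le_sum (fun j _ => hb0 j) (Finset.mem_univ i)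
        _ = 1 := hsb)
  nlinarith [hT0]

/-- Two-sided classical Fannes inequality. -/
lemma classical_fannes_abs {d : ℕ} (p q : Fin d → ℝ)
    (hp : ∀ i, 0 ≤ p i) (hq : ∀ i, 0 ≤ q i)
    (hsp : ∑ i, p i = 1) (hsq : ∑ i, q i = 1) {T : ℝ}
    (hTV : (1/2) * ∑ i, |p i - q i| ≤ T) (hT1 : T ≤ 1) :
    |∑ i, Real.negMulLog (p i) - ∑ i, Real.negMulLog (q i)| ≤
      T * Real.log d + (Real.negMulLog T + Real.negMulLog (1 - T)) := by
  have hTV' : (1/2) * ∑ i, |q i - p i| ≤ T := by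
    have : ∀ i, |q i - p i| = |p i - q i| := fun i => abs_sub_comm _ _
    rw [Finset.sum_congr rfl (fun i _ => this i)]
    exact hTV
  exact abs_sub_le_iff.mpr
    ⟨classical_fannes_one_sided p q hp hq hsp hsq hTV hT1,
     classical_fannes_one_sided q p hq hp hsq hsp hTV' hT1⟩

end FAClassical

section FAMatrix
open Matrix
open scoped ComplexOrder

variable {n : Type*} [Fintype n] [DecidableEq n] {A B : Matrix n n ℂ}

namespace FA

lemma star_mul_self_eigU (hA : A.IsHermitian) :
    star (hA.eigenvectorUnitary : Matrix n n ℂ) * (hA.eigenvectorUnitary : Matrix n n ℂ) = 1 :=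
  Unitary.coe_star_mul_self hA.eigenvectorUnitary

lemma hcfc_eq (hA : A.IsHermitian) (f : ℝ → ℝ) :
    hA.cfc f = (hA.eigenvectorUnitary : Matrix n n ℂ) *
      diagonal (Complex.ofReal ∘ f ∘ hA.eigenvalues) * star (hA.eigenvectorUnitary : Matrix n n ℂ) := rfl

lemma trace_hcfc (hA : A.IsHermitian) (f : ℝ → ℝ) :
    Matrix.trace (hA.cfc f) = ((∑ i, f (hA.eigenvalues i) : ℝ) : ℂ) := by
  rw [hcfc_eq, Matrix.trace_mul_cycle, star_mul_self_eigU, one_mul,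
    Matrix.trace_diagonal]
  push_cast
  rfl

lemma hcfc_id (hA : A.IsHermitian) : hA.cfc (fun x => x) = A := by
  rw [hcfc_eq]
  exact hA.spectral_theorem.symm

lemma hcfc_mul (hA : A.IsHermitian) (f g : ℝ → ℝ) :
    hA.cfc f * hA.cfc g = hA.cfc (fun x => f x * g x) := by
  have key : ∀ D1 D2 : Matrix n n ℂ,
      ((hA.eigenvectorUnitary : Matrix n n ℂ) * D1 * star (hA.eigenvectorUnitary : Matrix n n ℂ)) *
      ((hA.eigenvectorUnitary : Matrix n n ℂ) * D2 * star (hA.eigenvectorUnitary : Matrix n n ℂ)) =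
      (hA.eigenvectorUnitary : Matrix n n ℂ) *
        (D1 * ((star (hA.eigenvectorUnitary : Matrix n n ℂ) *
          (hA.eigenvectorUnitary : Matrix n n ℂ)) * D2)) *
        star (hA.eigenvectorUnitary : Matrix n n ℂ) := by
    intro D1 D2; noncomm_ring
  simp only [hcfc_eq]
  rw [key, star_mul_self_eigU, one_mul, diagonal_mul_diagonal]
  have : (fun i => (Complex.ofReal ∘ f ∘ hA.eigenvalues) i * (Complex.ofReal ∘ g ∘ hA.eigenvalues) i) =
      Complex.ofReal ∘ (fun x => f x * g x) ∘ hA.eigenvalues := by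
    funext i; simp
  rw [this]

lemma trace_mul_hcfc (hA : A.IsHermitian) (f : ℝ → ℝ) :
    Matrix.trace (A * hA.cfc f) =
      ((∑ i, hA.eigenvalues i * f (hA.eigenvalues i) : ℝ) : ℂ) := by
  have h : Matrix.trace (A * hA.cfc f) = Matrix.trace (hA.cfc (fun x => x) * hA.cfc f) := by
    rw [hcfc_id]
  rw [h, hcfc_mul, trace_hcfc]

lemma hcfc_sub (hA : A.IsHermitian) (f g : ℝ → ℝ) :
    hA.cfc f - hA.cfc g = hA.cfc (fun x => f x - g x) := by
  simp only [hcfc_eq]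
  rw [← sub_mul, ← mul_sub, diagonal_sub]
  have : (fun i => (Complex.ofReal ∘ f ∘ hA.eigenvalues) i - (Complex.ofReal ∘ g ∘ hA.eigenvalues) i) =
      Complex.ofReal ∘ (fun x => f x - g x) ∘ hA.eigenvalues := by
    funext i; simp
  rw [this]

lemma hcfc_posSemidef (hA : A.IsHermitian) {f : ℝ → ℝ}
    (hf : ∀ i, 0 ≤ f (hA.eigenvalues i)) : (hA.cfc f).PosSemidef := by
  rw [hcfc_eq]
  refine (posSemidef_diagonal_iff.mpr ?_).mul_mul_conjTranspose_same _
  intro i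
  simp only [Function.comp_apply]
  exact_mod_cast hf i

lemma sum_eigenvalues_eq_trace (hA : A.IsHermitian) :
    ((∑ i, hA.eigenvalues i : ℝ) : ℂ) = Matrix.trace A := by
  rw [← trace_hcfc hA (fun x => x), hcfc_id]

/-- Sorted (increasing) eigenvalues of a Hermitian matrix. -/
noncomputable def sortedEig (hA : A.IsHermitian) : Fin (Fintype.card n) → ℝ :=
  (hA.eigenvalues ∘ (Fintype.equivFin n).symm) ∘
    Tuple.sort (hA.eigenvalues ∘ (Fintype.equivFin n).symm)

lemma sortedEig_monotone (hA : A.IsHermitian) : Monotone (sortedEig hA) :=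
  Tuple.monotone_sort _

/-- The sorting bijection. -/
noncomputable def sortEquiv (hA : A.IsHermitian) : Fin (Fintype.card n) ≃ n :=
  (Tuple.sort (hA.eigenvalues ∘ (Fintype.equivFin n).symm)).trans (Fintype.equivFin n).symm

lemma sortedEig_eq (hA : A.IsHermitian) (j : Fin (Fintype.card n)) :
    sortedEig hA j = hA.eigenvalues (sortEquiv hA j) := rfl

lemma sum_comp_sortedEig (hA : A.IsHermitian) (g : ℝ → ℝ) :
    ∑ j, g (sortedEig hA j) = ∑ i, g (hA.eigenvalues i) := by
  simpa [sortedEig_eq] using Equiv.sum_comp (sortEquiv hA) (fun i => g (hA.eigenvalues i))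

section quad

lemma star_dot_mulVec_self (hA : A.IsHermitian) (v w : n → ℂ) :
    star ((hA.eigenvectorUnitary : Matrix n n ℂ) *ᵥ v) ⬝ᵥ
      ((hA.eigenvectorUnitary : Matrix n n ℂ) *ᵥ w) = star v ⬝ᵥ w := by
  rw [star_mulVec, dotProduct_mulVec, vecMul_vecMul, ← Matrix.star_eq_conjTranspose,
    Unitary.coe_star_mul_self hA.eigenvectorUnitary, vecMul_one]

lemma quad_norm (hA : A.IsHermitian) (c : n → ℂ) :
    star ((hA.eigenvectorUnitary : Matrix n n ℂ) *ᵥ c) ⬝ᵥ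
      ((hA.eigenvectorUnitary : Matrix n n ℂ) *ᵥ c) =
      ((∑ i, Complex.normSq (c i) : ℝ) : ℂ) := by
  rw [star_dot_mulVec_self hA c c, dotProduct]
  push_cast
  congr 1
  funext i
  simp [Pi.star_apply, Complex.normSq_eq_conj_mul_self]

lemma quad_eig (hA : A.IsHermitian) (c : n → ℂ) :
    star ((hA.eigenvectorUnitary : Matrix n n ℂ) *ᵥ c) ⬝ᵥ
      (A *ᵥ ((hA.eigenvectorUnitary : Matrix n n ℂ) *ᵥ c)) =
      ((∑ i, hA.eigenvalues i * Complex.normSq (c i) : ℝ) : ℂ) := by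
  have hAU : A * (hA.eigenvectorUnitary : Matrix n n ℂ) =
      (hA.eigenvectorUnitary : Matrix n n ℂ) * diagonal (Complex.ofReal ∘ hA.eigenvalues) := by
    have h' : star (hA.eigenvectorUnitary : Matrix n n ℂ) *
        (A * (hA.eigenvectorUnitary : Matrix n n ℂ)) =
        diagonal (Complex.ofReal ∘ hA.eigenvalues) := by
      rw [← mul_assoc]
      have h := hA.conjStarAlgAut_star_eigenvectorUnitary
      rw [Unitary.conjStarAlgAut_apply, Unitary.coe_star, star_star] at h
      exact h
    calc A * (hA.eigenvectorUnitary : Matrix n n ℂ)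
        = 1 * (A * (hA.eigenvectorUnitary : Matrix n n ℂ)) := by rw [one_mul]
      _ = ((hA.eigenvectorUnitary : Matrix n n ℂ) * star (hA.eigenvectorUnitary : Matrix n n ℂ)) *
            (A * (hA.eigenvectorUnitary : Matrix n n ℂ)) := by
          congr 1
          exact (Unitary.coe_mul_star_self hA.eigenvectorUnitary).symm
      _ = (hA.eigenvectorUnitary : Matrix n n ℂ) *
            (star (hA.eigenvectorUnitary : Matrix n n ℂ) *
              (A * (hA.eigenvectorUnitary : Matrix n n ℂ))) := by
          rw [mul_assoc]
      _ = _ := by rw [h']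
  have h1 : A *ᵥ ((hA.eigenvectorUnitary : Matrix n n ℂ) *ᵥ c) =
      (hA.eigenvectorUnitary : Matrix n n ℂ) *ᵥ
        (diagonal (Complex.ofReal ∘ hA.eigenvalues) *ᵥ c) := by
    rw [mulVec_mulVec, mulVec_mulVec, hAU]
  rw [h1, star_dot_mulVec_self hA, dotProduct]
  push_cast
  congr 1
  funext i
  rw [mulVec_diagonal]
  simp only [Function.comp_apply, Pi.star_apply, Complex.star_def]
  ring_nf
  simp [Complex.normSq_eq_conj_mul_self]
  ring

end quad

section span

/-- Span of the eigenvectors indexed by a finset. -/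
noncomputable def eigSpan (hA : A.IsHermitian) (S : Finset n) : Submodule ℂ (n → ℂ) :=
  Submodule.span ℂ (Set.range (fun i : S =>
    ((hA.eigenvectorUnitary : Matrix n n ℂ) *ᵥ Pi.single (i : n) (1 : ℂ))))

lemma eigU_inj (hA : A.IsHermitian) :
    Function.Injective ((hA.eigenvectorUnitary : Matrix n n ℂ)).mulVecLin := by
  intro x y hxy
  simp only [mulVecLin_apply] at hxy
  have := congrArg (fun v => star (hA.eigenvectorUnitary : Matrix n n ℂ) *ᵥ v) hxy
  simpa [mulVec_mulVec, Unitary.coe_star_mul_self hA.eigenvectorUnitary] using this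

lemma eigCols_linIndep (hA : A.IsHermitian) :
    LinearIndependent ℂ (fun i : n => (hA.eigenvectorUnitary : Matrix n n ℂ) *ᵥ
      Pi.single i (1 : ℂ)) := by
  have hb : LinearIndependent ℂ (fun i : n => (Pi.single i (1 : ℂ) : n → ℂ)) := by
    have := (Pi.basisFun ℂ n).linearIndependent
    have heq : ⇑(Pi.basisFun ℂ n) = fun i : n => (Pi.single i (1 : ℂ) : n → ℂ) := by
      funext i; exact Pi.basisFun_apply ℂ n i
    rwa [heq] at this
  have := hb.map' ((hA.eigenvectorUnitary : Matrix n n ℂ)).mulVecLin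
    (LinearMap.ker_eq_bot.mpr (eigU_inj hA))
  exact this

lemma finrank_eigSpan (hA : A.IsHermitian) (S : Finset n) :
    Module.finrank ℂ (eigSpan hA S) = S.card := by
  have hli : LinearIndependent ℂ (fun i : S =>
      (hA.eigenvectorUnitary : Matrix n n ℂ) *ᵥ Pi.single (i : n) (1 : ℂ)) :=
    (eigCols_linIndep hA).comp _ Subtype.val_injective
  rw [eigSpan, finrank_span_eq_card hli, Fintype.card_coe]

lemma mem_eigSpan (hA : A.IsHermitian) (S : Finset n) {u : n → ℂ} (hu : u ∈ eigSpan hA S) :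
    ∃ c : n → ℂ, (∀ i, i ∉ S → c i = 0) ∧
      u = (hA.eigenvectorUnitary : Matrix n n ℂ) *ᵥ c := by
  obtain ⟨a, ha⟩ := (Submodule.mem_span_range_iff_exists_fun ℂ).mp hu
  refine ⟨(∑ i : S, a i • (Pi.single (i : n) (1 : ℂ) : n → ℂ) : n → ℂ), ?_, ?_⟩
  · intro i hi
    rw [Finset.sum_apply]
    refine Finset.sum_eq_zero fun j _ => ?_
    have : (j : n) ≠ i := fun h => hi (h ▸ j.2)
    simp [Pi.single_apply, this]
  · rw [← ha]
    have : ∀ v : n → ℂ, (hA.eigenvectorUnitary : Matrix n n ℂ) *ᵥ v =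
        ((hA.eigenvectorUnitary : Matrix n n ℂ)).mulVecLin v := fun _ => rfl
    rw [this, map_sum]
    refine (Finset.sum_congr rfl fun i _ => ?_).symm
    rw [LinearMap.map_smul]
    rfl

lemma exists_ne_zero_mem_inf (V W : Submodule ℂ (n → ℂ))
    (h : Fintype.card n < Module.finrank ℂ V + Module.finrank ℂ W) :
    ∃ u : n → ℂ, u ≠ 0 ∧ u ∈ V ⊓ W := by
  have hsum := Submodule.finrank_sup_add_finrank_inf_eq V W
  have hle : Module.finrank ℂ ↥(V ⊔ W) ≤ Fintype.card n := by
    calc Module.finrank ℂ ↥(V ⊔ W) ≤ Module.finrank ℂ (n → ℂ) := Submodule.finrank_le _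
      _ = Fintype.card n := by rw [Module.finrank_pi]
  have hpos : 0 < Module.finrank ℂ ↥(V ⊓ W) := by omega
  obtain ⟨x, hx⟩ := Module.finrank_pos_iff_exists_ne_zero.mp hpos
  exact ⟨x.1, by simpa using hx, x.2⟩

end span


/-- **Weyl monotonicity**: if `A ≤ B` in the Loewner order then each sorted eigenvalue
of `A` is at most the corresponding one of `B`. -/
lemma sortedEig_le_of_loewner (hA : A.IsHermitian) (hB : B.IsHermitian)
    (hAB : (B - A).PosSemidef) (k : Fin (Fintype.card n)) :
    sortedEig hA k ≤ sortedEig hB k := by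
  set SA : Finset n := (Finset.Ici k).image (sortEquiv hA) with hSA
  set SB : Finset n := (Finset.Iic k).image (sortEquiv hB) with hSB
  have hcardA : SA.card = Fintype.card n - k := by
    rw [hSA, Finset.card_image_of_injective _ (sortEquiv hA).injective, Fin.card_Ici]
  have hcardB : SB.card = k + 1 := by
    rw [hSB, Finset.card_image_of_injective _ (sortEquiv hB).injective, Fin.card_Iic]
  have hA_lb : ∀ i ∈ SA, sortedEig hA k ≤ hA.eigenvalues i := by
    intro i hi
    obtain ⟨j, hj, rfl⟩ := Finset.mem_image.mp hi
    rw [← sortedEig_eq]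
    exact sortedEig_monotone hA (Finset.mem_Ici.mp hj)
  have hB_ub : ∀ i ∈ SB, hB.eigenvalues i ≤ sortedEig hB k := by
    intro i hi
    obtain ⟨j, hj, rfl⟩ := Finset.mem_image.mp hi
    rw [← sortedEig_eq]
    exact sortedEig_monotone hB (Finset.mem_Iic.mp hj)
  obtain ⟨u, hu0, huV, huW⟩ : ∃ u : n → ℂ, u ≠ 0 ∧ u ∈ eigSpan hA SA ∧ u ∈ eigSpan hB SB := by
    have h := exists_ne_zero_mem_inf (eigSpan hA SA) (eigSpan hB SB) ?_
    · obtain ⟨u, h1, h2⟩ := h; exact ⟨u, h1, h2.1, h2.2⟩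
    · rw [finrank_eigSpan, finrank_eigSpan, hcardA, hcardB]
      have : (k : ℕ) < Fintype.card n := k.2
      omega
  obtain ⟨c, hc0, rfl⟩ := mem_eigSpan hA SA huV
  obtain ⟨c', hc'0, hucc⟩ := mem_eigSpan hB SB huW
  have hnorm : (∑ i, Complex.normSq (c i)) = (∑ i, Complex.normSq (c' i)) := by
    have h2 := quad_norm hB c'
    rw [← hucc, quad_norm hA c] at h2
    exact_mod_cast h2
  have hNpos : 0 < ∑ i, Complex.normSq (c i) := by
    have hc : c ≠ 0 := by
      rintro rfl
      simp only [Matrix.mulVec_zero, ne_eq, not_true_eq_false] at hu0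
    obtain ⟨i, hi⟩ := Function.ne_iff.mp hc
    refine Finset.sum_pos' (fun j _ => Complex.normSq_nonneg _) ⟨i, Finset.mem_univ i, ?_⟩
    simpa [Complex.normSq_pos] using hi
  have hq : (∑ i, hA.eigenvalues i * Complex.normSq (c i)) ≤
      (∑ i, hB.eigenvalues i * Complex.normSq (c' i)) := by
    have hpsd := (posSemidef_iff_dotProduct_mulVec.mp hAB).2 ((hA.eigenvectorUnitary : Matrix n n ℂ) *ᵥ c)
    rw [sub_mulVec, dotProduct_sub] at hpsd
    have hBq : star ((hA.eigenvectorUnitary : Matrix n n ℂ) *ᵥ c) ⬝ᵥ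
        (B *ᵥ ((hA.eigenvectorUnitary : Matrix n n ℂ) *ᵥ c)) =
        ((∑ i, hB.eigenvalues i * Complex.normSq (c' i) : ℝ) : ℂ) := by
      rw [hucc]; exact quad_eig hB c'
    rw [hBq, quad_eig hA c, ← Complex.ofReal_sub] at hpsd
    have := Complex.zero_le_real.mp hpsd
    linarith
  have hlow : sortedEig hA k * (∑ i, Complex.normSq (c i)) ≤
      ∑ i, hA.eigenvalues i * Complex.normSq (c i) := by
    rw [Finset.mul_sum]
    refine Finset.sum_le_sum fun i _ => ?_
    by_cases hi : i ∈ SA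
    · exact mul_le_mul_of_nonneg_right (hA_lb i hi) (Complex.normSq_nonneg _)
    · rw [hc0 i hi]; simp
  have hhigh : (∑ i, hB.eigenvalues i * Complex.normSq (c' i)) ≤
      sortedEig hB k * (∑ i, Complex.normSq (c' i)) := by
    rw [Finset.mul_sum]
    refine Finset.sum_le_sum fun i _ => ?_
    by_cases hi : i ∈ SB
    · exact mul_le_mul_of_nonneg_right (hB_ub i hi) (Complex.normSq_nonneg _)
    · rw [hc'0 i hi]; simp
  rw [← hnorm] at hhigh
  exact le_of_mul_le_mul_right (by linarith) hNpos

end FA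
end FAMatrix

/-- Fannes–Audenaert inequality: for density matrices `ρ, σ` on a `d`-dimensional Hilbert
space, `|S(ρ) - S(σ)| ≤ D(ρ,σ)·log₂ d + h(D(ρ,σ))`. -/
theorem fannes_audenaert {n : Type*} [Fintype n] [DecidableEq n]
    (ρ σ : Matrix n n ℂ) (hρ : IsDensityMatrix ρ) (hσ : IsDensityMatrix σ) :
    |vnEnt ρ - vnEnt σ| ≤
      traceDist ρ σ * Real.logb 2 (Fintype.card n) + binEnt (traceDist ρ σ) := by
  obtain ⟨hρP, hρT⟩ := hρ
  obtain ⟨hσP, hσT⟩ := hσ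
  have hρH : ρ.IsHermitian := hρP.1
  have hσH : σ.IsHermitian := hσP.1
  have hΔH : (ρ - σ).IsHermitian := hρH.sub hσH
  set r := FA.sortedEig hρH with hr_def
  set s := FA.sortedEig hσH with hs_def
  -- eigenvalue sums
  have sum_eig_ρ : ∑ i, hρH.eigenvalues i = 1 := by
    have := FA.sum_eigenvalues_eq_trace hρH
    rw [hρT] at this
    exact_mod_cast this
  have sum_eig_σ : ∑ i, hσH.eigenvalues i = 1 := by
    have := FA.sum_eigenvalues_eq_trace hσH
    rw [hσT] at this
    exact_mod_cast this
  have sum_eig_Δ : ∑ i, hΔH.eigenvalues i = 0 := by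
    have := FA.sum_eigenvalues_eq_trace hΔH
    rw [Matrix.trace_sub, hρT, hσT, sub_self] at this
    exact_mod_cast this
  have sum_r : ∑ j, r j = 1 := by
    rw [hr_def]
    have := FA.sum_comp_sortedEig hρH (fun x => x)
    simpa using this.trans sum_eig_ρ
  have sum_s : ∑ j, s j = 1 := by
    rw [hs_def]
    have := FA.sum_comp_sortedEig hσH (fun x => x)
    simpa using this.trans sum_eig_σ
  have hr0 : ∀ j, 0 ≤ r j := fun j => by
    rw [hr_def, FA.sortedEig_eq]; exact hρP.eigenvalues_nonneg _
  have hs0 : ∀ j, 0 ≤ s j := fun j => by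
    rw [hs_def, FA.sortedEig_eq]; exact hσP.eigenvalues_nonneg _
  -- trace distance value
  set D := traceDist ρ σ with hD_def
  set TrΔp := ∑ i, max (hΔH.eigenvalues i) 0 with hTp_def
  have hDval : D = (1/2) * ∑ i, |hΔH.eigenvalues i| := by
    rw [hD_def, traceDist, mfun, hΔH.cfc_eq, FA.trace_hcfc]
    simp
  have habs : ∀ x : ℝ, |x| = 2 * max x 0 - x := by
    intro x
    rcases le_total 0 x with h | h
    · rw [abs_of_nonneg h, max_eq_left h]; ring
    · rw [abs_of_nonpos h, max_eq_right h]; ring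
  have hD_eq : D = TrΔp := by
    rw [hDval, hTp_def]
    rw [Finset.sum_congr rfl (fun i _ => habs (hΔH.eigenvalues i))]
    rw [Finset.sum_sub_distrib, sum_eig_Δ, ← Finset.mul_sum]
    ring
  -- the positive part
  set Δp := hΔH.cfc (fun x => max x 0) with hΔp_def
  have hΔpP : Δp.PosSemidef := FA.hcfc_posSemidef hΔH (fun i => le_max_right _ _)
  have hMH : (σ + Δp).IsHermitian := hσH.add hΔpP.1
  have hMρ : ((σ + Δp) - ρ).PosSemidef := by
    have heq : (σ + Δp) - ρ = hΔH.cfc (fun x => max x 0 - x) := by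
      rw [← FA.hcfc_sub hΔH, FA.hcfc_id hΔH]
      abel
    rw [heq]
    exact FA.hcfc_posSemidef hΔH (fun i => sub_nonneg.mpr (le_max_left _ _))
  have hMσ : ((σ + Δp) - σ).PosSemidef := by
    have heq : (σ + Δp) - σ = Δp := by abel
    rw [heq]; exact hΔpP
  set t := FA.sortedEig hMH with ht_def
  have hrt : ∀ k, r k ≤ t k := fun k => FA.sortedEig_le_of_loewner hρH hMH hMρ k
  have hst : ∀ k, s k ≤ t k := fun k => FA.sortedEig_le_of_loewner hσH hMH hMσ k
  have sum_t : ∑ j, t j = 1 + TrΔp := by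
    have h1 : ((∑ j, t j : ℝ) : ℂ) = ((1 + TrΔp : ℝ) : ℂ) := by
      rw [ht_def]
      have h2 := FA.sum_comp_sortedEig hMH (fun x => x)
      have h3 : (((∑ j, FA.sortedEig hMH j : ℝ)) : ℂ) = Matrix.trace (σ + Δp) := by
        rw [show ∑ j, FA.sortedEig hMH j = ∑ i, hMH.eigenvalues i from by simpa using h2]
        exact FA.sum_eigenvalues_eq_trace hMH
      rw [h3, Matrix.trace_add, hσT, hΔp_def, FA.trace_hcfc, hTp_def]
      push_cast
      ring
    exact_mod_cast h1
  -- total variation bound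
  have hTV : (1/2) * ∑ j, |r j - s j| ≤ D := by
    have key : ∀ j, |r j - s j| ≤ (t j - r j) + (t j - s j) := by
      intro j
      have h1 := hrt j
      have h2 := hst j
      rw [abs_sub_le_iff]
      constructor <;> linarith
    have hsum : ∑ j, |r j - s j| ≤ ∑ j, ((t j - r j) + (t j - s j)) :=
      Finset.sum_le_sum fun j _ => key j
    have h2 : ∑ j, ((t j - r j) + (t j - s j)) = 2 * TrΔp := by
      simp only [Finset.sum_add_distrib, Finset.sum_sub_distrib, sum_t, sum_r, sum_s]
      ring
    rw [hD_eq]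
    linarith
  -- D bounds
  have hD0 : 0 ≤ D := by
    rw [hDval]
    positivity
  have hD1 : D ≤ 1 := by
    have hρΔ : (ρ - (ρ - σ)).PosSemidef := by
      have : ρ - (ρ - σ) = σ := by abel
      rw [this]; exact hσP
    have hW : ∀ k, FA.sortedEig hΔH k ≤ r k := fun k =>
      FA.sortedEig_le_of_loewner hΔH hρH hρΔ k
    have h1 : TrΔp = ∑ j, max (FA.sortedEig hΔH j) 0 := by
      rw [hTp_def, FA.sum_comp_sortedEig hΔH (fun x => max x 0)]
    have h2 : ∀ j, max (FA.sortedEig hΔH j) 0 ≤ r j := by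
      intro j
      exact max_le (hW j) (hr0 j)
    rw [hD_eq, h1]
    calc ∑ j, max (FA.sortedEig hΔH j) 0 ≤ ∑ j, r j := Finset.sum_le_sum fun j _ => h2 j
      _ = 1 := sum_r
  -- entropy values
  have hlog2 : (0:ℝ) < Real.log 2 := Real.log_pos (by norm_num)
  have hent : ∀ (A : Matrix n n ℂ) (hAH : A.IsHermitian),
      vnEnt A = (∑ i, Real.negMulLog (hAH.eigenvalues i)) / Real.log 2 := by
    intro A hAH
    rw [vnEnt, mfun, hAH.cfc_eq, FA.trace_mul_hcfc]
    rw [Complex.ofReal_re]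
    calc -(∑ i, hAH.eigenvalues i * Real.logb 2 (hAH.eigenvalues i))
        = ∑ i, (Real.negMulLog (hAH.eigenvalues i) / Real.log 2) := by
          rw [← Finset.sum_neg_distrib]
          refine Finset.sum_congr rfl fun i _ => ?_
          rw [Real.negMulLog, Real.logb]
          ring
      _ = (∑ i, Real.negMulLog (hAH.eigenvalues i)) / Real.log 2 := by
          rw [Finset.sum_div]
  have hvρ : vnEnt ρ = (∑ j, Real.negMulLog (r j)) / Real.log 2 := by
    rw [hent ρ hρH, hr_def, FA.sum_comp_sortedEig hρH Real.negMulLog]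
  have hvσ : vnEnt σ = (∑ j, Real.negMulLog (s j)) / Real.log 2 := by
    rw [hent σ hσH, hs_def, FA.sum_comp_sortedEig hσH Real.negMulLog]
  -- classical inequality
  have hclass := classical_fannes_abs r s hr0 hs0 sum_r sum_s hTV hD1
  -- final conversion
  rw [hvρ, hvσ, div_sub_div_same, abs_div, abs_of_pos hlog2]
  rw [div_le_iff₀ hlog2]
  have hRHS : (D * Real.logb 2 (Fintype.card n) + binEnt D) * Real.log 2 =
      D * Real.log (Fintype.card n) + (Real.negMulLog D + Real.negMulLog (1 - D)) := by
    rw [binEnt, Real.logb, Real.logb, Real.logb, Real.negMulLog, Real.negMulLog]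
    field_simp
    ring
  rw [hRHS]
  exact hclass
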